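/- arXiv:1412.4307 — 3 statements merged into one kernel-verified Lean document; each statement's English description precedes it below -/
import Mathlib

section
/- Let G(x) = (1/2)e^{-|x|} and let α ∈ (0,1). Define for each positive integer N the weight J_N(x) = e^{αN} for x < -N, J_N(x) = e^{-αx} for -N ≤ x ≤ 0, and J_N(x) = 1 for x > 0. Then there exists a constant C₀ > 0, independent of N, such that J_N(x)·(G ∗ J_N^{-1})(x) ≤ C₀ for all x ∈ ℝ, where (G ∗ J_N^{-1})(x) = ∫_ℝ G(x-y)/J_N(y) dy. -/
open MeasureTheory Real

/-- The weight function `J_N`. -/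
noncomputable def J (α : ℝ) (N : ℕ) (x : ℝ) : ℝ :=
  if x < -(N : ℝ) then Real.exp (α * N)
  else if x ≤ 0 then Real.exp (-α * x)
  else 1

lemma J_eq (α : ℝ) (N : ℕ) (x : ℝ) :
    J α N x = Real.exp (α * min (N : ℝ) (max (-x) 0)) := by
  have hN : (0:ℝ) ≤ N := Nat.cast_nonneg N
  unfold J
  split_ifs with h1 h2
  · rw [max_eq_left (by linarith), min_eq_left (by linarith)]
  · rw [max_eq_left (by linarith), min_eq_right (by push_neg at h1; linarith)]
    ring_nf
  · push_neg at h2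
    rw [max_eq_right (by linarith), min_eq_right hN, mul_zero, Real.exp_zero]

lemma J_one_le (α : ℝ) (hα : 0 ≤ α) (N : ℕ) (x : ℝ) : 1 ≤ J α N x := by
  rw [J_eq]
  exact Real.one_le_exp (mul_nonneg hα (le_min (Nat.cast_nonneg N) (le_max_right _ _)))

lemma J_pos (α : ℝ) (hα : 0 ≤ α) (N : ℕ) (x : ℝ) : 0 < J α N x :=
  lt_of_lt_of_le one_pos (J_one_le α hα N x)

lemma J_lipschitz (α : ℝ) (hα : 0 ≤ α) (N : ℕ) (x y : ℝ) :
    J α N x ≤ Real.exp (α * |x - y|) * J α N y := by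
  rw [J_eq, J_eq, ← Real.exp_add, Real.exp_le_exp]
  set A := max (-x) 0
  set B := max (-y) 0
  have hAB : A ≤ B + |x - y| := by
    apply max_le
    · have h1 : -y ≤ B := le_max_left _ _
      have h2 : y - x ≤ |x - y| := by rw [abs_sub_comm]; exact le_abs_self _
      linarith
    · have := le_max_right (-y) (0:ℝ)
      have := abs_nonneg (x - y)
      linarith
  have hmin : min (N:ℝ) A ≤ min (N:ℝ) B + |x - y| := by
    rcases le_total (N:ℝ) B with h | h
    · rw [min_eq_left h]
      have := min_le_left (N:ℝ) A
      have := abs_nonneg (x - y)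
      linarith
    · rw [min_eq_right h]
      exact le_trans (min_le_right _ _) hAB
  nlinarith [abs_nonneg (x - y)]

lemma J_measurable (α : ℝ) (N : ℕ) : Measurable (J α N) := by
  unfold J
  exact Measurable.ite (measurableSet_lt measurable_id measurable_const) measurable_const
    (Measurable.ite (measurableSet_le measurable_id measurable_const)
      (by fun_prop) measurable_const)

lemma integrable_exp_neg_abs {c : ℝ} (hc : 0 < c) :
    Integrable (fun z : ℝ => Real.exp (-c * |z|)) := by
  have hIoi : IntegrableOn (fun z : ℝ => Real.exp (-c * |z|)) (Set.Ioi (0:ℝ)) := by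
    apply (exp_neg_integrableOn_Ioi 0 hc).congr_fun ?_ measurableSet_Ioi
    intro z hz
    show Real.exp (-c * z) = Real.exp (-c * |z|)
    rw [abs_of_pos hz]
  have hIic : IntegrableOn (fun z : ℝ => Real.exp (-c * |z|)) (Set.Iic (0:ℝ)) := by
    rw [← Measure.map_neg_eq_self (volume : Measure ℝ)]
    have m : MeasurableEmbedding fun x : ℝ => -x := (Homeomorph.neg ℝ).measurableEmbedding
    rw [m.integrableOn_map_iff]
    simp_rw [Function.comp_def, abs_neg, Set.neg_preimage, Set.neg_Iic, neg_zero]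
    exact Iff.mpr integrableOn_Ici_iff_integrableOn_Ioi hIoi
  have h := hIic.union hIoi
  rwa [Set.Iic_union_Ioi, integrableOn_univ] at h

/-- `J_N(x) (G ∗ J_N⁻¹)(x) ≤ C₀` uniformly in `N` and `x`, where `G(x) = (1/2)e^{-|x|}`. -/
theorem JN_weighted_conv_bound (α : ℝ) (hα : α ∈ Set.Ioo (0:ℝ) 1) :
    ∃ C₀ > (0:ℝ), ∀ N : ℕ, 0 < N → ∀ x : ℝ,
      J α N x * (∫ y : ℝ, (1/2) * Real.exp (-|x - y|) / J α N y) ≤ C₀ := by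
  obtain ⟨hα0, hα1⟩ := hα
  have h1α : 0 < 1 - α := by linarith
  set I : ℝ := ∫ z : ℝ, Real.exp (-(1 - α) * |z|) with hI
  have hInn : 0 ≤ I := integral_nonneg fun z => (Real.exp_pos _).le
  refine ⟨(1/2) * I + 1, by positivity, fun N _ x => ?_⟩
  have hgint : Integrable (fun z : ℝ => Real.exp (-(1 - α) * |z|)) :=
    integrable_exp_neg_abs h1α
  have hgxint : Integrable (fun y : ℝ => Real.exp (-(1 - α) * |x - y|)) :=
    hgint.comp_sub_left x
  have h1int : Integrable (fun z : ℝ => Real.exp (-(1:ℝ) * |z|)) :=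
    integrable_exp_neg_abs one_pos
  have h1xint : Integrable (fun y : ℝ => Real.exp (-(1:ℝ) * |x - y|)) :=
    h1int.comp_sub_left x
  have hfmeas : AEStronglyMeasurable (fun y : ℝ => (1/2) * Real.exp (-|x - y|) / J α N y)
      volume := by
    apply Measurable.aestronglyMeasurable
    exact (measurable_const.mul (by fun_prop)).div (J_measurable α N)
  have hfint : Integrable (fun y : ℝ => (1/2) * Real.exp (-|x - y|) / J α N y) := by
    apply Integrable.mono h1xint hfmeas
    filter_upwards with y
    rw [norm_of_nonneg (div_nonneg (by positivity) (J_pos α hα0.le N y).le),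
        norm_of_nonneg (Real.exp_pos _).le]
    have hJ := J_one_le α hα0.le N y
    calc (1/2) * Real.exp (-|x - y|) / J α N y ≤ (1/2) * Real.exp (-|x - y|) / 1 := by
          apply div_le_div_of_nonneg_left (by positivity) one_pos hJ
      _ ≤ Real.exp (-(1:ℝ) * |x - y|) := by rw [div_one, neg_one_mul]; nlinarith [Real.exp_pos (-|x - y|)]
  calc J α N x * ∫ y : ℝ, (1/2) * Real.exp (-|x - y|) / J α N y
      = ∫ y : ℝ, J α N x * ((1/2) * Real.exp (-|x - y|) / J α N y) :=
        (integral_const_mul _ _).symm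
    _ ≤ ∫ y : ℝ, (1/2) * Real.exp (-(1 - α) * |x - y|) := by
        apply integral_mono (hfint.const_mul _) (hgxint.const_mul _)
        intro y
        have hJy := J_pos α hα0.le N y
        have hlip := J_lipschitz α hα0.le N x y
        have : J α N x / J α N y ≤ Real.exp (α * |x - y|) := by
          rw [div_le_iff₀ hJy]; exact hlip
        calc J α N x * ((1/2) * Real.exp (-|x - y|) / J α N y)
            = (1/2) * Real.exp (-|x - y|) * (J α N x / J α N y) := by ring
          _ ≤ (1/2) * Real.exp (-|x - y|) * Real.exp (α * |x - y|) := by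
              apply mul_le_mul_of_nonneg_left this (by positivity)
          _ = (1/2) * Real.exp (-(1 - α) * |x - y|) := by
              rw [mul_assoc, ← Real.exp_add]; ring_nf
    _ = (1/2) * ∫ y : ℝ, Real.exp (-(1 - α) * |x - y|) := integral_const_mul _ _
    _ = (1/2) * I := by
        rw [hI, ← integral_sub_left_eq_self (fun z => Real.exp (-(1 - α) * |z|)) volume x]
    _ ≤ (1/2) * I + 1 := by linarith
end

section
/- Let E₀ > 0 and let Q : [0,T) → ℝ be continuously differentiable with Q(0) < -9E₀√(2E₀) and Q'(t) ≤ -(1/(6E₀))Q(t)² + 27E₀² for all t ∈ [0,T). Then Q(t) < -9E₀√(2E₀) for all t ∈ [0,T), Q is strictly decreasing, and if T is maximal so that Q(t) → -∞ as t ↑ T, then T ≤ (√2/(3√E₀)) · log((Q(0) - 9E₀√(2E₀))/(Q(0) + 9E₀√(2E₀))). -/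
open MeasureTheory Real Filter

/-- Riccati comparison argument underlying the blow-up result. -/
theorem riccati_blowup (E₀ T : ℝ) (hE : 0 < E₀) (hT : 0 < T) (Q Q' : ℝ → ℝ)
    (hQ' : ∀ t ∈ Set.Ico 0 T, HasDerivAt Q (Q' t) t)
    (hQ'cont : ContinuousOn Q' (Set.Ico 0 T))
    (h0 : Q 0 < -9 * E₀ * Real.sqrt (2 * E₀))
    (hineq : ∀ t ∈ Set.Ico 0 T, Q' t ≤ -(1 / (6 * E₀)) * Q t ^ 2 + 27 * E₀ ^ 2) :
    (∀ t ∈ Set.Ico 0 T, Q t < -9 * E₀ * Real.sqrt (2 * E₀)) ∧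
    StrictAntiOn Q (Set.Ico 0 T) ∧
    (Tendsto Q (nhdsWithin T (Set.Iio T)) atBot →
      T ≤ Real.sqrt 2 / (3 * Real.sqrt E₀) *
        Real.log ((Q 0 - 9 * E₀ * Real.sqrt (2 * E₀)) /
          (Q 0 + 9 * E₀ * Real.sqrt (2 * E₀)))) := by
  set s : ℝ := Real.sqrt (2 * E₀) with hs_def
  have hs2 : s ^ 2 = 2 * E₀ := Real.sq_sqrt (by linarith)
  have hsp : 0 < s := Real.sqrt_pos.2 (by linarith)
  set M : ℝ := 9 * E₀ * s with hM_def
  have hMpos : 0 < M := by positivity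
  have h0' : Q 0 < -M := by
    have : (-9) * E₀ * s = -M := by ring
    linarith [h0, this.ge]
  -- key sign fact
  have key : ∀ x : ℝ, x < -M → -(1 / (6 * E₀)) * x ^ 2 + 27 * E₀ ^ 2 < 0 := by
    intro x hx
    have hM2 : M ^ 2 = 162 * E₀ ^ 3 := by
      have h81 : M ^ 2 = 81 * E₀ ^ 2 * s ^ 2 := by rw [hM_def]; ring
      rw [h81, hs2]; ring
    have hx2 : 162 * E₀ ^ 3 < x ^ 2 := by
      nlinarith [hM2, sq_nonneg (x + M), mul_pos hMpos (show (0:ℝ) < -M - x by linarith)]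
    have h6 : (0:ℝ) < 1 / (6 * E₀) := by positivity
    have heq : 1 / (6 * E₀) * (162 * E₀ ^ 3) = 27 * E₀ ^ 2 := by
      field_simp; ring
    nlinarith [mul_lt_mul_of_pos_left hx2 h6]
  have hQcont : ContinuousOn Q (Set.Ico 0 T) := fun t ht =>
    ((hQ' t ht).continuousAt).continuousWithinAt
  -- Part 1: barrier
  have part1 : ∀ t ∈ Set.Ico 0 T, Q t < -M := by
    by_contra hcon
    push_neg at hcon
    obtain ⟨s₀, hs₀T, hs₀⟩ := hcon
    have hsub : Set.Icc 0 s₀ ⊆ Set.Ico 0 T := fun x hx =>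
      ⟨hx.1, lt_of_le_of_lt hx.2 hs₀T.2⟩
    set S : Set ℝ := Set.Icc 0 s₀ ∩ Q ⁻¹' Set.Ici (-M) with hS_def
    have hSne : S.Nonempty := ⟨s₀, ⟨hs₀T.1, le_refl _⟩, hs₀⟩
    have hSclosed : IsClosed S :=
      (hQcont.mono hsub).preimage_isClosed_of_isClosed isClosed_Icc isClosed_Ici
    have hbdd : BddBelow S := ⟨0, fun x hx => hx.1.1⟩
    set t₁ : ℝ := sInf S with ht₁_def
    have ht₁mem : t₁ ∈ S := hSclosed.csInf_mem hSne hbdd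
    have ht₁Icc : t₁ ∈ Set.Icc 0 s₀ := ht₁mem.1
    have ht₁Q : -M ≤ Q t₁ := ht₁mem.2
    have ht₁pos : 0 < t₁ := by
      rcases lt_or_eq_of_le ht₁Icc.1 with h | h
      · exact h
      · exfalso; rw [← h] at ht₁Q; linarith
    have hbelow : ∀ t ∈ Set.Ico (0:ℝ) t₁, Q t < -M := by
      intro t ht
      by_contra hq
      push_neg at hq
      have : t ∈ S := ⟨⟨ht.1, le_trans ht.2.le ht₁Icc.2⟩, hq⟩
      exact absurd (csInf_le hbdd this) (not_le.2 ht.2)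
    have hsub2 : Set.Icc 0 t₁ ⊆ Set.Ico 0 T := fun x hx =>
      hsub ⟨hx.1, le_trans hx.2 ht₁Icc.2⟩
    have hanti : AntitoneOn Q (Set.Icc 0 t₁) := by
      apply antitoneOn_of_deriv_nonpos (convex_Icc 0 t₁) (hQcont.mono hsub2)
      · intro x hx
        rw [interior_Icc] at hx
        exact ((hQ' x (hsub2 ⟨hx.1.le, hx.2.le⟩)).differentiableAt).differentiableWithinAt
      · intro x hx
        rw [interior_Icc] at hx
        have hxm := hsub2 (⟨hx.1.le, hx.2.le⟩ : x ∈ Set.Icc 0 t₁)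
        rw [(hQ' x hxm).deriv]
        exact le_of_lt (lt_of_le_of_lt (hineq x hxm) (key _ (hbelow x ⟨hx.1.le, hx.2⟩)))
    have := hanti (Set.mem_Icc.2 ⟨le_refl _, ht₁pos.le⟩)
      (Set.mem_Icc.2 ⟨ht₁pos.le, le_refl _⟩) ht₁pos.le
    linarith
  -- Part 2
  have part2 : StrictAntiOn Q (Set.Ico 0 T) := by
    apply strictAntiOn_of_deriv_neg (convex_Ico 0 T) hQcont
    intro x hx
    rw [interior_Ico] at hx
    have hxm : x ∈ Set.Ico 0 T := ⟨hx.1.le, hx.2⟩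
    rw [(hQ' x hxm).deriv]
    exact lt_of_le_of_lt (hineq x hxm) (key _ (part1 x hxm))
  refine ⟨fun t ht => by have h := part1 t ht; rw [hM_def] at h; linarith, part2, ?_⟩
  intro _
  -- Part 3
  set k : ℝ := 3 * s with hk_def
  have hkpos : 0 < k := by positivity
  set g : ℝ → ℝ := fun t => Real.log ((Q t + M) / (Q t - M)) - k * t with hg_def
  have hne : ∀ t ∈ Set.Ico 0 T, Q t - M ≠ 0 ∧ Q t + M ≠ 0 := by
    intro t ht
    have := part1 t ht
    constructor <;> intro h <;> nlinarith
  have hg : ∀ t ∈ Set.Ico 0 T, HasDerivAt g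
      ((Q' t * (Q t - M) - (Q t + M) * Q' t) / (Q t - M) ^ 2 / ((Q t + M) / (Q t - M)) - k) t := by
    intro t ht
    have hu := hQ' t ht
    obtain ⟨h1, h2⟩ := hne t ht
    have hr : HasDerivAt (fun x => (Q x + M) / (Q x - M))
        ((Q' t * (Q t - M) - (Q t + M) * Q' t) / (Q t - M) ^ 2) t :=
      (hu.add_const M).div (hu.sub_const M) h1
    have hratne : (Q t + M) / (Q t - M) ≠ 0 := div_ne_zero h2 h1
    have hlin : HasDerivAt (fun x : ℝ => k * x) k t := by
      simpa using (hasDerivAt_id t).const_mul k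
    exact (hr.log hratne).sub hlin
  have hGnonneg : ∀ t ∈ Set.Ico 0 T,
      0 ≤ (Q' t * (Q t - M) - (Q t + M) * Q' t) / (Q t - M) ^ 2 / ((Q t + M) / (Q t - M)) - k := by
    intro t ht
    have hu := part1 t ht
    obtain ⟨h1, h2⟩ := hne t ht
    have hd := hineq t ht
    have hP : 0 < (Q t - M) * (Q t + M) := by nlinarith
    have hexpr : (Q' t * (Q t - M) - (Q t + M) * Q' t) / (Q t - M) ^ 2 / ((Q t + M) / (Q t - M)) - k
        = (-2 * M * Q' t - k * ((Q t - M) * (Q t + M))) / ((Q t - M) * (Q t + M)) := by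
      field_simp
      ring
    rw [hexpr]
    apply div_nonneg _ hP.le
    have h6 : 6 * E₀ * Q' t ≤ -(Q t ^ 2) + 162 * E₀ ^ 3 := by
      have hmul := mul_le_mul_of_nonneg_left hd (by linarith : (0:ℝ) ≤ 6 * E₀)
      have hcanc : (6 * E₀) * (1 / (6 * E₀)) = 1 := by field_simp
      nlinarith [hmul, hcanc]
    have hb : 0 ≤ -18 * E₀ * Q' t - 3 * Q t ^ 2 + 486 * E₀ ^ 3 := by linarith
    have hprod := mul_nonneg hsp.le hb
    have hs3' : E₀ ^ 2 * s ^ 3 = 2 * E₀ ^ 3 * s := by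
      have hcube : s ^ 3 = s ^ 2 * s := by ring
      rw [hcube, hs2]; ring
    rw [hM_def, hk_def]
    nlinarith [hprod, hs3']
  -- monotonicity of g
  have hmono : ∀ t ∈ Set.Ico 0 T, g 0 ≤ g t := by
    intro t ht
    rcases eq_or_lt_of_le ht.1 with h | h
    · rw [← h]
    have hsub : Set.Icc 0 t ⊆ Set.Ico 0 T := fun x hx =>
      ⟨hx.1, lt_of_le_of_lt hx.2 ht.2⟩
    have hm : MonotoneOn g (Set.Icc 0 t) := by
      apply monotoneOn_of_deriv_nonneg (convex_Icc 0 t)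
        (fun x hx => ((hg x (hsub hx)).continuousAt).continuousWithinAt)
      · intro x hx
        rw [interior_Icc] at hx
        exact ((hg x (hsub ⟨hx.1.le, hx.2.le⟩)).differentiableAt).differentiableWithinAt
      · intro x hx
        rw [interior_Icc] at hx
        have hxm := hsub (⟨hx.1.le, hx.2.le⟩ : x ∈ Set.Icc 0 t)
        rw [(hg x hxm).deriv]
        exact hGnonneg x hxm
    exact hm (Set.mem_Icc.2 ⟨le_refl _, h.le⟩) (Set.mem_Icc.2 ⟨h.le, le_refl _⟩) h.le
  set L : ℝ := Real.log ((Q 0 - M) / (Q 0 + M)) with hL_def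
  have h0mem : (0:ℝ) ∈ Set.Ico 0 T := ⟨le_refl _, hT⟩
  obtain ⟨h10, h20⟩ := hne 0 h0mem
  have hQ0M : Q 0 - M < 0 := by linarith
  have hQ0M' : Q 0 + M < 0 := by linarith
  have hLeq : -Real.log ((Q 0 + M) / (Q 0 - M)) = L := by
    rw [hL_def, ← Real.log_inv, inv_div]
  have hLpos : 0 < L := by
    apply Real.log_pos
    rw [lt_div_iff_of_neg hQ0M']
    linarith
  have hRlt : ∀ t ∈ Set.Ico 0 T, Real.log ((Q t + M) / (Q t - M)) < 0 := by
    intro t ht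
    have hu := part1 t ht
    have hd1 : Q t - M < 0 := by linarith
    have hd2 : Q t + M < 0 := by linarith
    have hpos : 0 < (Q t + M) / (Q t - M) := div_pos_of_neg_of_neg hd2 hd1
    have hlt1 : (Q t + M) / (Q t - M) < 1 := by
      rw [div_lt_one_of_neg hd1]; linarith
    exact Real.log_neg hpos hlt1
  have hbound : ∀ t ∈ Set.Ico 0 T, k * t < L := by
    intro t ht
    have h1 := hmono t ht
    have h2 := hRlt t ht
    simp only [hg_def, mul_zero, sub_zero] at h1
    linarith [hLeq]
  have hTle : T ≤ L / k := by
    by_contra h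
    push_neg at h
    have hmem : L / k ∈ Set.Ico 0 T := ⟨by positivity, h⟩
    have := hbound _ hmem
    rw [mul_div_cancel₀ _ hkpos.ne'] at this
    exact lt_irrefl _ this
  have hsplit : s = Real.sqrt 2 * Real.sqrt E₀ := Real.sqrt_mul (by norm_num) E₀
  have hsE : 0 < Real.sqrt E₀ := Real.sqrt_pos.2 hE
  have hs2' : Real.sqrt 2 ^ 2 = 2 := Real.sq_sqrt (by norm_num)
  have hs2p : 0 < Real.sqrt 2 := Real.sqrt_pos.2 (by norm_num)
  have hfinal : L / k ≤ Real.sqrt 2 / (3 * Real.sqrt E₀) * L := by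
    rw [hk_def, hsplit, div_le_iff₀ (by positivity)]
    rw [div_mul_eq_mul_div, div_mul_eq_mul_div, le_div_iff₀ (by positivity)]
    nlinarith [hLpos, hs2', hs2p, hsE, mul_pos hLpos hsE]
  have : T ≤ Real.sqrt 2 / (3 * Real.sqrt E₀) * L := le_trans hTle hfinal
  convert this using 3 <;> ring
end

section
/- Let E₀ > 0 and Q : [0,T) → ℝ be C¹ with Q(0) < -9E₀√(2E₀) and Q'(t) ≤ -(1/(6E₀))(Q(t) - 9E₀√(2E₀))(Q(t) + 9E₀√(2E₀)). Then for all t ∈ [0,T): ((Q(0)+9E₀√(2E₀))/(Q(0)-9E₀√(2E₀))) e^{(3/2)√(2E₀) t} - 1 ≤ 18E₀√(2E₀)/(Q(t) - 9E₀√(2E₀)) ≤ 0. -/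
open MeasureTheory Real Filter

/-- Explicit solution estimate (2.16) for the Riccati differential inequality. -/
theorem riccati_explicit_estimate (E₀ T : ℝ) (hE : 0 < E₀) (hT : 0 < T) (Q Q' : ℝ → ℝ)
    (hQ' : ∀ t ∈ Set.Ico 0 T, HasDerivAt Q (Q' t) t)
    (hQ'cont : ContinuousOn Q' (Set.Ico 0 T))
    (h0 : Q 0 < -9 * E₀ * Real.sqrt (2 * E₀))
    (hineq : ∀ t ∈ Set.Ico 0 T, Q' t ≤ -(1 / (6 * E₀)) *
      (Q t - 9 * E₀ * Real.sqrt (2 * E₀)) * (Q t + 9 * E₀ * Real.sqrt (2 * E₀))) :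
    ∀ t ∈ Set.Ico 0 T,
      ((Q 0 + 9 * E₀ * Real.sqrt (2 * E₀)) / (Q 0 - 9 * E₀ * Real.sqrt (2 * E₀))) *
          Real.exp ((3 / 2) * Real.sqrt (2 * E₀) * t) - 1 ≤
        18 * E₀ * Real.sqrt (2 * E₀) / (Q t - 9 * E₀ * Real.sqrt (2 * E₀)) ∧
      18 * E₀ * Real.sqrt (2 * E₀) / (Q t - 9 * E₀ * Real.sqrt (2 * E₀)) ≤ 0 := by
  set s : ℝ := Real.sqrt (2 * E₀) with hs_def
  have hs : 0 < s := Real.sqrt_pos.mpr (by linarith)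
  set a : ℝ := 9 * E₀ * s with ha_def
  have ha : 0 < a := by positivity
  have h0' : Q 0 < -a := by rw [ha_def]; linarith [h0]
  clear_value s
  clear_value a
  -- invariance: Q t ≤ Q 0 on [0, T)
  have hmono : ∀ t ∈ Set.Ico (0:ℝ) T, Q t ≤ Q 0 := by
    intro t ht
    have hsub : Set.Icc (0:ℝ) t ⊆ Set.Ico 0 T := fun x hx =>
      ⟨hx.1, lt_of_le_of_lt hx.2 ht.2⟩
    have hsub' : Set.Ico (0:ℝ) t ⊆ Set.Ico 0 T := fun x hx =>
      ⟨hx.1, hx.2.trans ht.2⟩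
    have := image_le_of_deriv_right_lt_deriv_boundary
      (f := Q) (f' := Q') (a := 0) (b := t) (B := fun _ => Q 0) (B' := fun _ => 0)
      (fun x hx => ((hQ' x (hsub hx)).continuousAt).continuousWithinAt)
      (fun x hx => (hQ' x (hsub' hx)).hasDerivWithinAt)
      le_rfl (fun x => hasDerivAt_const x (Q 0))
      ?_ ⟨ht.1, le_refl t⟩
    · exact this
    · intro x hx hQx
      have h1 := hineq x (hsub' hx)
      rw [hQx, mul_assoc] at h1
      have hXY : 0 < (Q 0 - a) * (Q 0 + a) :=
        mul_pos_of_neg_of_neg (by linarith) (by linarith)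
      have hc : -(1 / (6 * E₀)) < 0 := by
        have : (0:ℝ) < 1 / (6 * E₀) := by positivity
        linarith
      have hneg := mul_neg_of_neg_of_pos hc hXY
      have h1' : Q' x ≤ -(1 / (6 * E₀)) * ((Q 0 - a) * (Q 0 + a)) := h1
      show Q' x < 0
      linarith
  have hQlt : ∀ t ∈ Set.Ico (0:ℝ) T, Q t < -a := fun t ht =>
    lt_of_le_of_lt (hmono t ht) h0'
  -- v and its derivative bound
  set v : ℝ → ℝ := fun t => (Q t + a) / (Q t - a) with hv_def
  set k : ℝ := 3 * s with hk_def
  clear_value k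
  have hden : ∀ t ∈ Set.Ico (0:ℝ) T, Q t - a < 0 := fun t ht => by
    have := hQlt t ht; linarith
  have hdne : ∀ t ∈ Set.Ico (0:ℝ) T, Q t - a ≠ 0 := fun t ht => (hden t ht).ne
  have hv : ∀ t ∈ Set.Ico (0:ℝ) T,
      HasDerivAt v ((Q' t * (Q t - a) - (Q t + a) * Q' t) / (Q t - a) ^ 2) t := by
    intro t ht
    exact ((hQ' t ht).add_const a).div ((hQ' t ht).sub_const a) (hdne t ht)
  have hv_lb : ∀ t ∈ Set.Ico (0:ℝ) T,
      k * v t ≤ (Q' t * (Q t - a) - (Q t + a) * Q' t) / (Q t - a) ^ 2 := by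
    intro t ht
    have hp : Q t + a < 0 := by have := hQlt t ht; linarith
    have hd := hden t ht
    have hq := hineq t ht
    have hq' : Q' t ≤ -(1 / (6 * E₀)) * ((Q t - a) * (Q t + a)) := by
      rw [← mul_assoc]; exact hq
    have key : k * (Q t + a) * (Q t - a) ≤ -(2 * a) * Q' t := by
      have h2a : (0:ℝ) < 2 * a := by linarith
      have h3 : 2 * a * Q' t ≤ 2 * a * (-(1 / (6 * E₀)) * ((Q t - a) * (Q t + a))) :=
        mul_le_mul_of_nonneg_left hq' (le_of_lt h2a)
      have h4 : 2 * a * (-(1 / (6 * E₀)) * ((Q t - a) * (Q t + a)))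
          = -(k * (Q t + a) * (Q t - a)) := by
        rw [ha_def, hk_def]; field_simp; ring
      linarith [h3, h4.symm ▸ h3]
    have hnum : Q' t * (Q t - a) - (Q t + a) * Q' t = -(2 * a) * Q' t := by ring
    rw [hnum]
    have hne : Q t - a ≠ 0 := hdne t ht
    have hlhs : k * v t = k * (Q t + a) * (Q t - a) / (Q t - a) ^ 2 := by
      rw [hv_def]; field_simp
    rw [hlhs]
    gcongr
  -- g = v * exp(-k t) is monotone on Ico 0 T
  set g : ℝ → ℝ := fun t => v t * Real.exp (-k * t) with hg_def
  have hg : ∀ t ∈ Set.Ico (0:ℝ) T,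
      HasDerivAt g ((Q' t * (Q t - a) - (Q t + a) * Q' t) / (Q t - a) ^ 2
        * Real.exp (-k * t) + v t * (Real.exp (-k * t) * (-k * 1))) t := by
    intro t ht
    exact (hv t ht).mul (((hasDerivAt_id t).const_mul (-k)).exp)
  have hgmono : MonotoneOn g (Set.Ico 0 T) := by
    apply monotoneOn_of_deriv_nonneg (convex_Ico 0 T)
    · intro t ht
      exact ((hg t ht).continuousAt).continuousWithinAt
    · rw [interior_Ico]
      intro t ht
      exact ((hg t ⟨le_of_lt ht.1, ht.2⟩).differentiableAt).differentiableWithinAt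
    · rw [interior_Ico]
      intro t ht
      have ht' : t ∈ Set.Ico (0:ℝ) T := ⟨le_of_lt ht.1, ht.2⟩
      rw [(hg t ht').deriv]
      have h1 := hv_lb t ht'
      have h2 : 0 < Real.exp (-k * t) := Real.exp_pos _
      nlinarith [h1, h2]
  -- conclude
  intro t ht
  have h0mem : (0:ℝ) ∈ Set.Ico (0:ℝ) T := ⟨le_refl 0, hT⟩
  have hg0 : g 0 ≤ g t := hgmono h0mem ht ht.1
  have hv0pos : 0 < v 0 := div_pos_of_neg_of_neg (by linarith) (by linarith)
  have hvexp : v 0 * Real.exp (k * t) ≤ v t := by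
    have h1 : g 0 = v 0 := by simp [hg_def]
    have h2 : g t = v t * Real.exp (-k * t) := rfl
    have h3 : v 0 ≤ v t * Real.exp (-k * t) := by rw [← h1, ← h2]; exact hg0
    have h4 := mul_le_mul_of_nonneg_right h3 (le_of_lt (Real.exp_pos (k * t)))
    calc v 0 * Real.exp (k * t) ≤ v t * Real.exp (-k * t) * Real.exp (k * t) := h4
      _ = v t := by rw [mul_assoc, ← Real.exp_add]; simp
  have hne : Q t - a ≠ 0 := hdne t ht
  have hvt1 : v t - 1 = 2 * a / (Q t - a) := by
    rw [hv_def]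
    field_simp
    ring
  have hstep : v 0 * Real.exp ((3 / 2) * s * t) ≤ v t := by
    refine le_trans ?_ hvexp
    apply mul_le_mul_of_nonneg_left _ (le_of_lt hv0pos)
    apply Real.exp_le_exp.mpr
    rw [hk_def]
    nlinarith [ht.1, hs]
  have e2 : 18 * E₀ * s = 2 * a := by rw [ha_def]; ring
  have hv0 : v 0 = (Q 0 + a) / (Q 0 - a) := by rw [hv_def]
  constructor
  · rw [e2, ← hvt1, ← hv0]
    linarith [hstep]
  · rw [e2]
    exact le_of_lt (div_neg_of_pos_of_neg (by linarith) (hden t ht))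
end
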